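/- arXiv:1702.02255 — 5 statements merged into one kernel-verified Lean document; each statement's English description precedes it below -/
import Mathlib

section
/- Let K be a field of characteristic not 2, and let α₁, α₂, α₃ be distinct elements of K. Let E be the elliptic curve y² = (x−α₁)(x−α₂)(x−α₃). A point P = (x₀, y₀) ∈ E(K) is divisible by 2 in E(K) (i.e., there exists Q ∈ E(K) with 2Q = P) if and only if all three elements x₀−α₁, x₀−α₂, x₀−α₃ are squares in K. -/
/-- The elliptic curve `y² = (x − α₁)(x − α₂)(x − α₃)` as an affine Weierstrass curve. -/
def cubicCurve {K : Type*} [Field K] (α₁ α₂ α₃ : K) : WeierstrassCurve.Affine K :=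
  { a₁ := 0, a₂ := -(α₁ + α₂ + α₃), a₃ := 0,
    a₄ := α₁ * α₂ + α₂ * α₃ + α₃ * α₁, a₆ := -(α₁ * α₂ * α₃) }

open WeierstrassCurve.Affine WeierstrassCurve.Affine.Point

/-- The discriminant of `cubicCurve` is nonzero when the roots are distinct. -/
lemma cubicCurve_Δ_ne_zero {K : Type*} [Field K] (h2 : (2 : K) ≠ 0) (α₁ α₂ α₃ : K)
    (h12 : α₁ ≠ α₂) (h13 : α₁ ≠ α₃) (h23 : α₂ ≠ α₃) :
    (cubicCurve α₁ α₂ α₃).Δ ≠ 0 := by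
  have h : (cubicCurve α₁ α₂ α₃).Δ = 2 ^ 4 * ((α₁ - α₂) * (α₁ - α₃) * (α₂ - α₃)) ^ 2 := by
    simp only [cubicCurve, WeierstrassCurve.Δ, WeierstrassCurve.b₂, WeierstrassCurve.b₄,
      WeierstrassCurve.b₆, WeierstrassCurve.b₈]
    ring
  rw [h]
  exact mul_ne_zero (pow_ne_zero _ h2) (pow_ne_zero _ (mul_ne_zero (mul_ne_zero
    (sub_ne_zero.mpr h12) (sub_ne_zero.mpr h13)) (sub_ne_zero.mpr h23)))

/-- Two affine points with the same coordinates are equal. -/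
lemma cubicCurve_some_eq_some {K : Type*} [Field K] {W : WeierstrassCurve.Affine K}
    {x₁ y₁ x₂ y₂ : K} (h₁ : W.Nonsingular x₁ y₁) (hx : x₁ = x₂) (hy : y₁ = y₂)
    (h₂ : W.Nonsingular x₂ y₂) :
    WeierstrassCurve.Affine.Point.some x₁ y₁ h₁ = WeierstrassCurve.Affine.Point.some x₂ y₂ h₂ := by
  subst hx; subst hy; rfl

open Classical in
theorem divisible_by_two_iff_squares {K : Type*} [Field K] (h2 : (2 : K) ≠ 0)
    (α₁ α₂ α₃ : K) (h12 : α₁ ≠ α₂) (h13 : α₁ ≠ α₃) (h23 : α₂ ≠ α₃)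
    (x₀ y₀ : K) (hP : (cubicCurve α₁ α₂ α₃).Nonsingular x₀ y₀) :
    (∃ Q : (cubicCurve α₁ α₂ α₃).Point, 2 • Q = .some x₀ y₀ hP) ↔
      (∃ r : K, r ^ 2 = x₀ - α₁) ∧ (∃ r : K, r ^ 2 = x₀ - α₂) ∧
        (∃ r : K, r ^ 2 = x₀ - α₃) := by
  constructor
  · rintro ⟨Q, hQ⟩
    rw [two_smul] at hQ
    rcases Q with _ | @⟨x, y, h⟩
    · rw [← zero_def, add_zero] at hQ
      exact (some_ne_zero hP hQ.symm).elim
    by_cases hy : y = (cubicCurve α₁ α₂ α₃).negY x y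
    · rw [add_self_of_Y_eq hy] at hQ
      exact (some_ne_zero hP hQ.symm).elim
    rw [add_self_of_Y_ne hy] at hQ
    injection hQ with hx hy'
    have hy0 : y ≠ 0 := by
      intro h0
      apply hy
      simp only [negY, cubicCurve, h0]
      ring
    have heq : y ^ 2 = (x - α₁) * (x - α₂) * (x - α₃) := by
      have := ((cubicCurve α₁ α₂ α₃).nonsingular_iff x y).mp h |>.1
      rw [equation_iff] at this
      simp only [cubicCurve] at this
      linear_combination this
    have hs : (cubicCurve α₁ α₂ α₃).slope x x y y =
        (3 * x ^ 2 - 2 * (α₁ + α₂ + α₃) * x + (α₁ * α₂ + α₂ * α₃ + α₃ * α₁)) / (2 * y) := by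
      rw [slope_of_Y_ne rfl hy]
      simp only [negY, cubicCurve]
      ring_nf
    rw [addX, hs] at hx
    simp only [cubicCurve] at hx
    refine ⟨⟨((x - α₁) ^ 2 - (α₂ - α₁) * (α₃ - α₁)) / (2 * y), ?_⟩,
            ⟨((x - α₂) ^ 2 - (α₁ - α₂) * (α₃ - α₂)) / (2 * y), ?_⟩,
            ⟨((x - α₃) ^ 2 - (α₁ - α₃) * (α₂ - α₃)) / (2 * y), ?_⟩⟩ <;>
    · rw [← hx]
      have hf0 : (x - α₁) * (x - α₂) * (x - α₃) ≠ 0 := heq ▸ pow_ne_zero 2 hy0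
      simp only [div_pow, mul_pow]
      rw [heq]
      have ⟨hab, hc⟩ := mul_ne_zero_iff.mp hf0
      have ⟨ha, hb⟩ := mul_ne_zero_iff.mp hab
      simp only [zero_mul, add_zero]
      field_simp
      ring
  · rintro ⟨⟨r₁, hr₁⟩, ⟨r₂, hr₂⟩, ⟨r₃, hr₃⟩⟩
    have hα₁ : α₁ = x₀ - r₁ ^ 2 := by linear_combination hr₁
    have hα₂ : α₂ = x₀ - r₂ ^ 2 := by linear_combination hr₂
    have hα₃ : α₃ = x₀ - r₃ ^ 2 := by linear_combination hr₃
    subst hα₁; subst hα₂; subst hα₃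
    have hΔ := cubicCurve_Δ_ne_zero h2 _ _ _ h12 h13 h23
    let W := cubicCurve (x₀ - r₁ ^ 2) (x₀ - r₂ ^ 2) (x₀ - r₃ ^ 2)
    have hWdef : W = cubicCurve (x₀ - r₁ ^ 2) (x₀ - r₂ ^ 2) (x₀ - r₃ ^ 2) := rfl
    have hs12 : r₁ + r₂ ≠ 0 := fun h => h12 (by linear_combination (r₂ - r₁) * h)
    have hs13 : r₁ + r₃ ≠ 0 := fun h => h13 (by linear_combination (r₃ - r₁) * h)
    have hs23 : r₂ + r₃ ≠ 0 := fun h => h23 (by linear_combination (r₃ - r₂) * h)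
    set x : K := x₀ + (r₁ * r₂ + r₁ * r₃ + r₂ * r₃) with hxdef
    set y : K := (r₁ + r₂) * (r₁ + r₃) * (r₂ + r₃) with hydef
    have hy0 : y ≠ 0 := mul_ne_zero (mul_ne_zero hs12 hs13) hs23
    have heqn : W.Equation x y := by
      rw [equation_iff]
      simp only [hWdef, cubicCurve, hxdef, hydef]
      ring
    have hns : W.Nonsingular x y := (equation_iff_nonsingular_of_Δ_ne_zero (W := W) hΔ).mp heqn
    have hyne : y ≠ W.negY x y := by
      intro h
      apply hy0
      simp only [negY, hWdef, cubicCurve] at h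
      rcases mul_eq_zero.mp (show (2 : K) * y = 0 by linear_combination h) with h' | h'
      · exact absurd h' h2
      · exact h'
    have h2y : (2 : K) * y ≠ 0 := mul_ne_zero h2 hy0
    have hX : W.addX x x (W.slope x x y y) = x₀ := by
      rw [slope_of_Y_ne rfl hyne, addX]
      have hden : y - W.negY x y = 2 * y := by
        simp only [negY, hWdef, cubicCurve]; ring
      rw [hden]
      simp only [hWdef, cubicCurve]
      field_simp [h2y]
      simp only [hxdef, hydef]
      ring
    set L := W.slope x x y y with hL
    have hns2 : W.Nonsingular (W.addX x x L) (W.addY x x y L) :=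
      nonsingular_add hns hns fun h => hyne h.2
    have hns2' : W.Nonsingular x₀ (W.addY x x y L) := hX ▸ hns2
    have hcurve : (W.addY x x y L) = y₀ ∨ (W.addY x x y L) = W.negY x₀ y₀ :=
      Y_eq_of_X_eq (((W.nonsingular_iff _ _).mp hns2').1) (((W.nonsingular_iff _ _).mp hP).1) rfl
    rcases hcurve with hYY | hYY
    · exact ⟨Point.some _ _ hns, by
        rw [two_smul, add_self_of_Y_ne hyne]
        exact cubicCurve_some_eq_some _ hX hYY hP⟩
    · refine ⟨-Point.some _ _ hns, ?_⟩
      rw [two_smul, ← neg_add, add_self_of_Y_ne hyne, neg_some]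
      refine cubicCurve_some_eq_some _ hX ?_ hP
      rw [← hL, hX, hYY]
      exact W.negY_negY x₀ y₀
end

section
/- Let K be a field of characteristic not 2 and λ ∈ K with λ ∉ {0, 1, −1}. Consider the elliptic curve E: y² = (x+λ²)(x+1)x over K. Then the point Q = (λ, −λ(λ+1)) lies on E(K) and 2Q = (0,0); in particular Q has order 4, and E(K) contains a subgroup isomorphic to ℤ/4ℤ ⊕ ℤ/2ℤ. -/
private lemma some_eq_some' {K : Type*} [Field K] {W : WeierstrassCurve.Affine K}
    {x₁ y₁ x₂ y₂ : K} (h₁ : W.Nonsingular x₁ y₁) (hx : x₁ = x₂) (hy : y₁ = y₂)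
    (h₂ : W.Nonsingular x₂ y₂) :
    WeierstrassCurve.Affine.Point.some _ _ h₁ = WeierstrassCurve.Affine.Point.some _ _ h₂ := by
  subst hx hy; rfl

private lemma subgroup_embed {A : Type*} [AddCommGroup A] (P T : A) (h4 : (4:ℕ) • P = 0)
    (h2 : (2:ℕ) • T = 0)
    (hc : ∀ a : ZMod 4, ∀ b : ZMod 2, a.val • P + b.val • T = 0 → a = 0 ∧ b = 0) :
    ∃ φ : (ZMod 4 × ZMod 2) →+ A, Function.Injective φ := by
  have c4 : (zmultiplesHom A P) ((4:ℕ):ℤ) = 0 := by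
    rw [zmultiplesHom_apply, natCast_zsmul]; exact h4
  have c2 : (zmultiplesHom A T) ((2:ℕ):ℤ) = 0 := by
    rw [zmultiplesHom_apply, natCast_zsmul]; exact h2
  set φ₁ : ZMod 4 →+ A := ZMod.lift 4 ⟨zmultiplesHom A P, c4⟩ with hφ₁
  set φ₂ : ZMod 2 →+ A := ZMod.lift 2 ⟨zmultiplesHom A T, c2⟩ with hφ₂
  have e1 : ∀ a : ZMod 4, φ₁ a = a.val • P := by
    intro a
    conv_lhs => rw [show a = ((a.val : ℤ) : ZMod 4) by simp]
    rw [hφ₁, ZMod.lift_coe, zmultiplesHom_apply, natCast_zsmul]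
  have e2 : ∀ b : ZMod 2, φ₂ b = b.val • T := by
    intro b
    conv_lhs => rw [show b = ((b.val : ℤ) : ZMod 2) by simp]
    rw [hφ₂, ZMod.lift_coe, zmultiplesHom_apply, natCast_zsmul]
  refine ⟨φ₁.coprod φ₂, (injective_iff_map_eq_zero _).mpr ?_⟩
  rintro ⟨a, b⟩ h
  rw [AddMonoidHom.coprod_apply, e1, e2] at h
  obtain ⟨ha, hb⟩ := hc a b h
  simp [ha, hb, Prod.ext_iff]

open Classical in
open WeierstrassCurve.Affine WeierstrassCurve.Affine.Point in
theorem order_four_point_on_E1 {K : Type*} [Field K] (h2 : (2 : K) ≠ 0)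
    (lam : K) (h0 : lam ≠ 0) (h1 : lam ≠ 1) (hm1 : lam ≠ -1) :
    ∃ (hQ : (cubicCurve (-(lam ^ 2)) (-1) 0).Nonsingular lam (-(lam * (lam + 1))))
      (hW : (cubicCurve (-(lam ^ 2)) (-1) 0).Nonsingular 0 0),
      2 • (WeierstrassCurve.Affine.Point.some _ _ hQ) = .some _ _ hW ∧
      addOrderOf (WeierstrassCurve.Affine.Point.some _ _ hQ) = 4 ∧
      ∃ φ : (ZMod 4 × ZMod 2) →+ (cubicCurve (-(lam ^ 2)) (-1) 0).Point,
        Function.Injective φ := by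
  set W : WeierstrassCurve.Affine K := cubicCurve (-(lam ^ 2)) (-1) 0 with hWdef
  have ha₁ : W.a₁ = 0 := rfl
  have ha₂ : W.a₂ = lam ^ 2 + 1 := by show -(-(lam^2) + -1 + 0) = _; ring
  have ha₃ : W.a₃ = 0 := rfl
  have ha₄ : W.a₄ = lam ^ 2 := by show (-(lam^2)) * (-1) + (-1) * 0 + 0 * (-(lam^2)) = _; ring
  have ha₆ : W.a₆ = 0 := by show -((-(lam^2)) * (-1) * 0) = _; ring
  have hlp1 : lam + 1 ≠ 0 := fun h => hm1 (by linear_combination h)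
  have hlm1 : lam - 1 ≠ 0 := sub_ne_zero.mpr h1
  have hy0 : lam * (lam + 1) ≠ 0 := mul_ne_zero h0 hlp1
  have hQ : W.Nonsingular lam (-(lam * (lam + 1))) := by
    rw [nonsingular_iff, equation_iff, ha₁, ha₂, ha₃, ha₄, ha₆]
    refine ⟨by ring, Or.inr ?_⟩
    simp only [mul_zero, sub_zero, zero_mul]
    intro h
    exact hy0 <| (mul_eq_zero.mp (show (2:K) * (lam*(lam+1)) = 0 by
      linear_combination -h)).resolve_left h2
  have hW : W.Nonsingular 0 0 := by
    rw [nonsingular_zero, ha₃, ha₄, ha₆]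
    exact ⟨rfl, Or.inr (pow_ne_zero 2 h0)⟩
  have hW' : W.Nonsingular (-1) 0 := by
    rw [nonsingular_iff, equation_iff, ha₁, ha₂, ha₃, ha₄, ha₆]
    refine ⟨by ring, Or.inl ?_⟩
    intro h
    exact mul_ne_zero hlm1 hlp1 (by linear_combination h)
  have hnegQ : W.negY lam (-(lam * (lam + 1))) = lam * (lam + 1) := by
    rw [negY, ha₁, ha₃]; ring
  have hyne : -(lam * (lam + 1)) ≠ W.negY lam (-(lam * (lam + 1))) := by
    rw [hnegQ]
    intro h
    exact hy0 <| (mul_eq_zero.mp (show (2:K) * (lam*(lam+1)) = 0 by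
      linear_combination -h)).resolve_left h2
  have hL : W.slope lam lam (-(lam * (lam + 1))) (-(lam * (lam + 1))) = -(lam + 1) := by
    rw [slope_of_Y_ne rfl hyne, hnegQ, ha₁, ha₂, ha₄]
    rw [div_eq_iff (by intro h; exact hy0 ((mul_eq_zero.mp (show (2:K) * (lam*(lam+1)) = 0 by
      linear_combination -h)).resolve_left h2))]
    ring
  have hX : W.addX lam lam (W.slope lam lam (-(lam * (lam + 1))) (-(lam * (lam + 1)))) = 0 := by
    rw [addX, hL, ha₁, ha₂]; ring
  have hY : W.addY lam lam (-(lam * (lam + 1)))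
      (W.slope lam lam (-(lam * (lam + 1))) (-(lam * (lam + 1)))) = 0 := by
    rw [addY, negAddY, hX, negY, ha₁, ha₃, hL]; ring
  set P : W.Point := WeierstrassCurve.Affine.Point.some _ _ hQ with hP
  set T : W.Point := WeierstrassCurve.Affine.Point.some _ _ hW with hT
  set T' : W.Point := WeierstrassCurve.Affine.Point.some _ _ hW' with hT'
  have hdbl : (2 : ℕ) • P = T := by
    rw [two_nsmul, hP, add_self_of_Y_ne hyne]
    exact some_eq_some' _ hX hY hW
  have hnegT : W.negY 0 0 = 0 := by rw [negY, ha₁, ha₃]; ring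
  have hnegT' : W.negY (-1) 0 = 0 := by rw [negY, ha₁, ha₃]; ring
  have hTT : T + T = 0 := add_self_of_Y_eq hnegT.symm
  have hT'T' : (2:ℕ) • T' = 0 := by
    rw [two_nsmul]; exact add_self_of_Y_eq hnegT'.symm
  have h4 : (4 : ℕ) • P = 0 := by
    rw [show (4:ℕ) = 2 * 2 from rfl, mul_nsmul, hdbl, two_nsmul, hTT]
  have hPne : P ≠ 0 := some_ne_zero hQ
  have hTne : T ≠ 0 := some_ne_zero hW
  have h3P : (3:ℕ) • P = -P := by
    have h : (3:ℕ) • P + P = 0 := by rw [← succ_nsmul]; exact h4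
    exact eq_neg_of_add_eq_zero_left h
  have h2Pne : (2:ℕ) • P ≠ 0 := by rw [hdbl]; exact hTne
  have hord : addOrderOf P = 4 := by
    have hdvd : addOrderOf P ∣ 2 ^ 2 := by
      have := addOrderOf_dvd_of_nsmul_eq_zero h4
      norm_num at this ⊢
      exact this
    obtain ⟨i, hi, he⟩ := (Nat.dvd_prime_pow Nat.prime_two).mp hdvd
    interval_cases i
    · rw [pow_zero] at he
      exact absurd (AddMonoid.addOrderOf_eq_one_iff.mp he) hPne
    · exfalso
      have hz := addOrderOf_nsmul_eq_zero P
      rw [he] at hz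
      norm_num at hz
      exact h2Pne hz
    · rw [he]; norm_num
  have hT'ne : T' ≠ 0 := some_ne_zero hW'
  have hPT' : P + T' ≠ 0 := by
    rw [hP, hT', add_of_X_ne hm1]
    exact some_ne_zero _
  have hTT' : T + T' ≠ 0 := by
    rw [hT, hT', add_of_X_ne (show (0:K) ≠ -1 by intro h; exact one_ne_zero (α := K) (by linear_combination h))]
    exact some_ne_zero _
  have h3ne : (3:ℕ) • P ≠ 0 := by rw [h3P]; exact neg_ne_zero.mpr hPne
  have h3T' : (3:ℕ) • P + T' ≠ 0 := by
    rw [h3P, hP, neg_some, hT', add_of_X_ne hm1]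
    exact some_ne_zero _
  have hc : ∀ a : ZMod 4, ∀ b : ZMod 2, a.val • P + b.val • T' = 0 → a = 0 ∧ b = 0 := by
    intro a b h
    have hav : a.val = 0 ∨ a.val = 1 ∨ a.val = 2 ∨ a.val = 3 := by
      have := a.val_lt; omega
    have hbv : b.val = 0 ∨ b.val = 1 := by
      have := b.val_lt; omega
    have ha0 : a.val = 0 → a = 0 := fun h => by rwa [ZMod.val_eq_zero] at h
    have hb0 : b.val = 0 → b = 0 := fun h => by rwa [ZMod.val_eq_zero] at h
    rcases hav with hv | hv | hv | hv <;> rcases hbv with hw | hw <;>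
      rw [hv, hw] at h <;>
      simp only [zero_nsmul, one_nsmul, zero_add, add_zero] at h
    · exact ⟨ha0 hv, hb0 hw⟩
    · exact absurd h hT'ne
    · exact absurd h hPne
    · exact absurd h hPT'
    · exact absurd h h2Pne
    · exact absurd (by rw [hdbl] at h; exact h) hTT'
    · exact absurd h h3ne
    · exact absurd h h3T'
  exact ⟨hQ, hW, hdbl, hord, subgroup_embed P T' h4 hT'T' hc⟩
end

section
/- Let K be a field of characteristic not 2 and E an elliptic curve over K. Then E(K) contains a subgroup isomorphic to ℤ/4ℤ ⊕ ℤ/2ℤ if and only if there exists λ ∈ K \ {0, 1, −1} such that E is isomorphic over K to the curve y² = (x+λ²)(x+1)x. -/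
open WeierstrassCurve
open Classical

namespace VCAux


variable {K : Type*} [Field K] {W : WeierstrassCurve.Affine K}
  {C : WeierstrassCurve.VariableChange K}

/-- x-coordinate map of a variable change. -/
def vcX (C : WeierstrassCurve.VariableChange K) (x : K) : K :=
  ((C.u⁻¹ : Kˣ) : K) ^ 2 * (x - C.r)

/-- y-coordinate map of a variable change. -/
def vcY (C : WeierstrassCurve.VariableChange K) (x y : K) : K :=
  ((C.u⁻¹ : Kˣ) : K) ^ 3 * (y - C.s * (x - C.r) - C.t)

lemma vcX_inj {x₁ x₂ : K} (h : vcX C x₁ = vcX C x₂) : x₁ = x₂ := by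
  have hv : ((C.u⁻¹ : Kˣ) : K) ≠ 0 := C.u⁻¹.ne_zero
  have h2 := mul_left_cancel₀ (pow_ne_zero 2 hv) h
  exact sub_left_injective h2

lemma vcY_inj {x : K} {y₁ y₂ : K} (h : vcY C x y₁ = vcY C x y₂) : y₁ = y₂ := by
  have hv : ((C.u⁻¹ : Kˣ) : K) ≠ 0 := C.u⁻¹.ne_zero
  have h2 := mul_left_cancel₀ (pow_ne_zero 3 hv) h
  have h3 : y₁ - C.s * (x - C.r) - C.t = y₂ - C.s * (x - C.r) - C.t := h2
  exact sub_left_injective (sub_left_injective h3)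

lemma vc_equation {x y : K} (h : W.Equation x y) :
    (C • W).toAffine.Equation (vcX C x) (vcY C x y) := by
  rw [WeierstrassCurve.Affine.equation_iff] at h ⊢
  simp only [vcX, vcY, variableChange_a₁, variableChange_a₂, variableChange_a₃,
    variableChange_a₄, variableChange_a₆, Units.val_pow_eq_pow_val]
  linear_combination ((C.u⁻¹ : Kˣ) : K) ^ 6 * h

lemma vc_negY (x y : K) :
    (C • W).toAffine.negY (vcX C x) (vcY C x y) = vcY C x (W.negY x y) := by
  simp only [vcX, vcY, WeierstrassCurve.Affine.negY, variableChange_a₁, variableChange_a₃,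
    Units.val_pow_eq_pow_val]
  ring

lemma vc_addX (x₁ x₂ L : K) :
    (C • W).toAffine.addX (vcX C x₁) (vcX C x₂)
      (((C.u⁻¹ : Kˣ) : K) * (L - C.s)) = vcX C (W.addX x₁ x₂ L) := by
  simp only [vcX, WeierstrassCurve.Affine.addX, variableChange_a₁, variableChange_a₂,
    Units.val_pow_eq_pow_val]
  ring

lemma vc_negAddY (x₁ x₂ y₁ L : K) :
    (C • W).toAffine.negAddY (vcX C x₁) (vcX C x₂) (vcY C x₁ y₁)
      (((C.u⁻¹ : Kˣ) : K) * (L - C.s)) = vcY C (W.addX x₁ x₂ L) (W.negAddY x₁ x₂ y₁ L) := by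
  simp only [WeierstrassCurve.Affine.negAddY, vc_addX]
  simp only [vcX, vcY, WeierstrassCurve.Affine.addX, WeierstrassCurve.Affine.negAddY,
    variableChange_a₁, variableChange_a₂, Units.val_pow_eq_pow_val]
  ring

lemma vc_addY (x₁ x₂ y₁ L : K) :
    (C • W).toAffine.addY (vcX C x₁) (vcX C x₂) (vcY C x₁ y₁)
      (((C.u⁻¹ : Kˣ) : K) * (L - C.s)) = vcY C (W.addX x₁ x₂ L) (W.addY x₁ x₂ y₁ L) := by
  rw [WeierstrassCurve.Affine.addY, vc_negAddY, vc_addX, vc_negY,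
    WeierstrassCurve.Affine.addY]

lemma vc_slope {x₁ x₂ y₁ y₂ : K} (h₁ : W.Equation x₁ y₁) (h₂ : W.Equation x₂ y₂)
    (hxy : x₁ = x₂ → y₁ ≠ W.negY x₂ y₂) :
    (C • W).toAffine.slope (vcX C x₁) (vcX C x₂) (vcY C x₁ y₁) (vcY C x₂ y₂) =
      ((C.u⁻¹ : Kˣ) : K) * (W.slope x₁ x₂ y₁ y₂ - C.s) := by
  have hv : ((C.u⁻¹ : Kˣ) : K) ≠ 0 := C.u⁻¹.ne_zero
  by_cases hx : x₁ = x₂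
  · have hy : y₁ ≠ W.negY x₂ y₂ := hxy hx
    have hyy := WeierstrassCurve.Affine.Y_eq_of_Y_ne h₁ h₂ hx hy
    subst hx
    subst hyy
    have hy' : vcY C x₁ y₁ ≠ (C • W).toAffine.negY (vcX C x₁) (vcY C x₁ y₁) := by
      rw [vc_negY]
      exact fun hh => hy (vcY_inj hh)
    rw [WeierstrassCurve.Affine.slope_of_Y_ne rfl hy',
      WeierstrassCurve.Affine.slope_of_Y_ne rfl hy]
    have hD : y₁ - W.negY x₁ y₁ ≠ 0 := sub_ne_zero.mpr hy
    have hnum : 3 * (vcX C x₁) ^ 2 + 2 * (C • W).toAffine.a₂ * (vcX C x₁) +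
        (C • W).toAffine.a₄ - (C • W).toAffine.a₁ * (vcY C x₁ y₁) =
        ((C.u⁻¹ : Kˣ) : K) ^ 4 * ((3 * x₁ ^ 2 + 2 * W.a₂ * x₁ + W.a₄ - W.a₁ * y₁)
          - C.s * (y₁ - W.negY x₁ y₁)) := by
      simp only [vcX, vcY, WeierstrassCurve.Affine.negY, variableChange_a₁, variableChange_a₂,
        variableChange_a₄, Units.val_pow_eq_pow_val]
      ring
    have hden : vcY C x₁ y₁ - (C • W).toAffine.negY (vcX C x₁) (vcY C x₁ y₁) =
        ((C.u⁻¹ : Kˣ) : K) ^ 3 * (y₁ - W.negY x₁ y₁) := by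
      rw [vc_negY]
      simp only [vcY, WeierstrassCurve.Affine.negY]
      ring
    rw [hnum, hden]
    have hDe : y₁ - W.negY x₁ y₁ = 2 * y₁ + W.a₁ * x₁ + W.a₃ := by
      simp only [WeierstrassCurve.Affine.negY]; ring
    rw [hDe] at hD ⊢
    field_simp
    linear_combination (-C.s) * mul_inv_cancel₀ hD
  · have hx' : vcX C x₁ ≠ vcX C x₂ := fun hh => hx (vcX_inj hh)
    rw [WeierstrassCurve.Affine.slope_of_X_ne hx', WeierstrassCurve.Affine.slope_of_X_ne hx]
    have hd : x₁ - x₂ ≠ 0 := sub_ne_zero.mpr hx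
    simp only [vcX, vcY]
    field_simp
    linear_combination (y₁ - y₂ - C.s * (x₁ - x₂)) * mul_inv_cancel₀ hd



lemma vc_Δ_ne_zero (C : WeierstrassCurve.VariableChange K) (hΔ : W.Δ ≠ 0) :
    (C • W).Δ ≠ 0 := by
  rw [WeierstrassCurve.variableChange_Δ]
  exact mul_ne_zero (pow_ne_zero _ C.u⁻¹.ne_zero) hΔ

lemma nonsingular_of_Δ_ne_zero' (V : WeierstrassCurve.Affine K) {x y : K} (h : V.Equation x y)
    (hΔ : V.Δ ≠ 0) : V.Nonsingular x y :=
  (V.equation_iff_nonsingular_of_Δ_ne_zero hΔ).mp h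

lemma vc_nonsingular (hΔ : W.Δ ≠ 0) {x y : K} (h : W.Nonsingular x y) :
    (C • W).toAffine.Nonsingular (vcX C x) (vcY C x y) :=
  nonsingular_of_Δ_ne_zero' _ (vc_equation h.left) (vc_Δ_ne_zero C hΔ)

lemma some_eq_some {W' : WeierstrassCurve.Affine K} {x₁ y₁ x₂ y₂ : K}
    {h₁ : W'.Nonsingular x₁ y₁} {h₂ : W'.Nonsingular x₂ y₂} (hx : x₁ = x₂) (hy : y₁ = y₂) :
    WeierstrassCurve.Affine.Point.some _ _ h₁ = WeierstrassCurve.Affine.Point.some _ _ h₂ := by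
  subst hx; subst hy; rfl

lemma some_inj {W' : WeierstrassCurve.Affine K} {x₁ y₁ x₂ y₂ : K}
    {h₁ : W'.Nonsingular x₁ y₁} {h₂ : W'.Nonsingular x₂ y₂}
    (h : WeierstrassCurve.Affine.Point.some _ _ h₁ = WeierstrassCurve.Affine.Point.some _ _ h₂) :
    x₁ = x₂ ∧ y₁ = y₂ := by
  injection h with hx hy
  exact ⟨hx, hy⟩

variable (W C) in
/-- The map on points induced by a variable change. -/
noncomputable def vcFun (hΔ : W.Δ ≠ 0) : W.Point → (C • W).toAffine.Point
  | .zero => .zero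
  | .some _ _ h => .some _ _ (vc_nonsingular hΔ h)

lemma vcFun_zero (hΔ : W.Δ ≠ 0) : vcFun W C hΔ 0 = 0 := rfl

lemma vcFun_some (hΔ : W.Δ ≠ 0) {x y : K} (h : W.Nonsingular x y) :
    vcFun W C hΔ (.some _ _ h) = .some _ _ (vc_nonsingular hΔ h) := rfl

lemma vcFun_add (hΔ : W.Δ ≠ 0) (P Q : W.Point) :
    vcFun W C hΔ (P + Q) = vcFun W C hΔ P + vcFun W C hΔ Q := by
  rcases P with _ | @⟨x₁, y₁, h₁⟩
  · rw [← WeierstrassCurve.Affine.Point.zero_def, zero_add, vcFun_zero, zero_add]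
  rcases Q with _ | @⟨x₂, y₂, h₂⟩
  · rw [← WeierstrassCurve.Affine.Point.zero_def, add_zero, vcFun_zero, add_zero]
  by_cases hx : x₁ = x₂
  · by_cases hy : y₁ = W.negY x₂ y₂
    · rw [WeierstrassCurve.Affine.Point.add_of_Y_eq hx hy, vcFun_zero, vcFun_some, vcFun_some,
        WeierstrassCurve.Affine.Point.add_of_Y_eq (by rw [hx]) (by rw [vc_negY, hy, hx])]
    · have hxy : x₁ = x₂ → y₁ ≠ W.negY x₂ y₂ := fun _ => hy
      have hxy' : vcX C x₁ = vcX C x₂ →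
          vcY C x₁ y₁ ≠ (C • W).toAffine.negY (vcX C x₂) (vcY C x₂ y₂) := by
        intro _ hc
        rw [vc_negY] at hc
        exact hy (by subst hx; exact vcY_inj hc)
      rw [WeierstrassCurve.Affine.Point.add_some (fun h => hxy h.1 h.2), vcFun_some, vcFun_some, vcFun_some,
        WeierstrassCurve.Affine.Point.add_some (fun h => hxy' h.1 h.2)]
      exact some_eq_some
        (by rw [vc_slope h₁.left h₂.left hxy, vc_addX])
        (by rw [vc_slope h₁.left h₂.left hxy, vc_addY])
  · have hxy : x₁ = x₂ → y₁ ≠ W.negY x₂ y₂ := fun h => absurd h hx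
    have hxy' : vcX C x₁ = vcX C x₂ →
        vcY C x₁ y₁ ≠ (C • W).toAffine.negY (vcX C x₂) (vcY C x₂ y₂) :=
      fun h => absurd (vcX_inj h) hx
    rw [WeierstrassCurve.Affine.Point.add_some (fun h => hxy h.1 h.2), vcFun_some, vcFun_some, vcFun_some,
      WeierstrassCurve.Affine.Point.add_some (fun h => hxy' h.1 h.2)]
    exact some_eq_some
      (by rw [vc_slope h₁.left h₂.left hxy, vc_addX])
      (by rw [vc_slope h₁.left h₂.left hxy, vc_addY])

variable (W C) in
/-- The group homomorphism on points induced by a variable change. -/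
noncomputable def vcHom (hΔ : W.Δ ≠ 0) : W.Point →+ (C • W).toAffine.Point where
  toFun := vcFun W C hΔ
  map_zero' := rfl
  map_add' := vcFun_add hΔ

lemma vcHom_injective (hΔ : W.Δ ≠ 0) : Function.Injective (vcHom W C hΔ) := by
  intro P Q h
  rcases P with _ | @⟨x₁, y₁, h₁⟩ <;> rcases Q with _ | @⟨x₂, y₂, h₂⟩
  · rfl
  · exact absurd h.symm (WeierstrassCurve.Affine.Point.some_ne_zero _)
  · exact absurd h (WeierstrassCurve.Affine.Point.some_ne_zero _)
  · obtain ⟨hx, hy⟩ := some_inj h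
    have hx' := vcX_inj hx
    subst hx'
    exact some_eq_some rfl (vcY_inj hy)




lemma some_ne_zero' {K : Type*} [Field K] {V : WeierstrassCurve.Affine K} {x y : K}
    (h : V.Nonsingular x y) : WeierstrassCurve.Affine.Point.some _ _ h ≠ 0 :=
  WeierstrassCurve.Affine.Point.some_ne_zero h

lemma add_ne_zero_of_X_ne {K : Type*} [Field K] {V : WeierstrassCurve.Affine K}
    {x₁ y₁ x₂ y₂ : K} {h₁ : V.Nonsingular x₁ y₁} {h₂ : V.Nonsingular x₂ y₂} (hx : x₁ ≠ x₂) :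
    WeierstrassCurve.Affine.Point.some _ _ h₁ + WeierstrassCurve.Affine.Point.some _ _ h₂ ≠ 0 := by
  rw [WeierstrassCurve.Affine.Point.add_of_X_ne hx]
  exact WeierstrassCurve.Affine.Point.some_ne_zero _

lemma hom_of_points {K : Type*} [Field K] {V : WeierstrassCurve.Affine K}
    {xp yp x0 y0 xq yq : K}
    (hp : V.Nonsingular xp yp) (h0 : V.Nonsingular x0 y0) (hq : V.Nonsingular xq yq)
    (hPP : WeierstrassCurve.Affine.Point.some _ _ hp + .some _ _ hp = .some _ _ h0)
    (hTT : WeierstrassCurve.Affine.Point.some _ _ h0 + .some _ _ h0 = 0)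
    (hQQ : WeierstrassCurve.Affine.Point.some _ _ hq + .some _ _ hq = 0)
    (hx_pq : xp ≠ xq) (hx_0q : x0 ≠ xq) :
    ∃ φ : (ZMod 4 × ZMod 2) →+ V.Point, Function.Injective φ := by
  set P : V.Point := .some _ _ hp with hPdef
  set T : V.Point := .some _ _ h0 with hTdef
  set Q : V.Point := .some _ _ hq with hQdef
  have h2P : (2 : ℤ) • P = T := by rw [two_zsmul]; exact hPP
  have h4P : (4 : ℤ) • P = 0 := by
    rw [show (4 : ℤ) = 2 + 2 by norm_num, add_smul, h2P, ← two_zsmul] at *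
    rw [two_zsmul]; exact hTT
  have h2Q : (2 : ℤ) • Q = 0 := by rw [two_zsmul]; exact hQQ
  have h3P : (3 : ℤ) • P = -P := by
    apply eq_neg_of_add_eq_zero_left
    have h31 : (3 : ℤ) • P + (1 : ℤ) • P = (4 : ℤ) • P := by
      rw [← add_smul]; norm_num
    rw [one_zsmul] at h31
    rw [h31, h4P]
  set f : ZMod 4 →+ V.Point := ZMod.lift 4 ⟨zmultiplesHom _ P, by simpa using h4P⟩ with hf
  set g : ZMod 2 →+ V.Point := ZMod.lift 2 ⟨zmultiplesHom _ Q, by simpa using h2Q⟩ with hg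
  have hfc : ∀ k : ℤ, f ((k : ℤ) : ZMod 4) = k • P := fun k => ZMod.lift_coe 4 _ k
  have hgc : ∀ k : ℤ, g ((k : ℤ) : ZMod 2) = k • Q := fun k => ZMod.lift_coe 2 _ k
  have hZ4 : ∀ c : ZMod 4, c = ((0:ℤ) : ZMod 4) ∨ c = ((1:ℤ) : ZMod 4) ∨
      c = ((2:ℤ) : ZMod 4) ∨ c = ((3:ℤ) : ZMod 4) := by decide
  have hZ2 : ∀ c : ZMod 2, c = ((0:ℤ) : ZMod 2) ∨ c = ((1:ℤ) : ZMod 2) := by decide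
  refine ⟨f.coprod g, (injective_iff_map_eq_zero _).mpr ?_⟩
  rintro ⟨a, b⟩ hab
  rw [AddMonoidHom.coprod_apply] at hab
  have ha := hZ4 a
  have hb := hZ2 b
  have hPne : P ≠ 0 := some_ne_zero' hp
  have hTne : T ≠ 0 := some_ne_zero' h0
  have hQne : Q ≠ 0 := some_ne_zero' hq
  have hnegP : -P = WeierstrassCurve.Affine.Point.some _ _
      ((WeierstrassCurve.Affine.nonsingular_neg xp yp).mpr hp) := rfl
  rcases ha with ha | ha | ha | ha <;> rcases hb with hb | hb <;>
      rw [ha, hb, hfc, hgc] at hab <;>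
      simp only [zero_smul, one_zsmul, h2P, h2Q, h3P, add_zero, zero_add] at hab
  · rw [ha, hb]; rfl
  · exact absurd hab hQne
  · exact absurd hab hPne
  · rw [hPdef, hQdef] at hab
    exact absurd hab (add_ne_zero_of_X_ne hx_pq)
  · exact absurd hab hTne
  · rw [hTdef, hQdef] at hab
    exact absurd hab (add_ne_zero_of_X_ne hx_0q)
  · exact absurd hab (neg_ne_zero.mpr hPne)
  · rw [hnegP, hQdef] at hab
    exact absurd hab (add_ne_zero_of_X_ne hx_pq)

lemma point_ne_zero_cases {K : Type*} [Field K] {V : WeierstrassCurve.Affine K}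
    (P : V.Point) (h : P ≠ 0) : ∃ x y, ∃ hn : V.Nonsingular x y, P = .some _ _ hn := by
  cases P with
  | zero => exact absurd rfl h
  | some _ _ hn => exact ⟨_, _, hn, rfl⟩



variable {K : Type*} [Field K]

lemma cubic_Δ (h2 : (2:K) ≠ 0) {lam : K} (h0 : lam ≠ 0) (h1 : lam ≠ 1) (hm1 : lam ≠ -1) :
    (cubicCurve (-(lam ^ 2)) (-1) 0).Δ ≠ 0 := by
  have hval : (cubicCurve (-(lam ^ 2)) (-1) 0 : WeierstrassCurve.Affine K).Δ =
      2 ^ 4 * lam ^ 4 * (lam - 1) ^ 2 * (lam + 1) ^ 2 := by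
    simp only [cubicCurve, WeierstrassCurve.Δ, WeierstrassCurve.b₂, WeierstrassCurve.b₄,
      WeierstrassCurve.b₆, WeierstrassCurve.b₈]
    ring
  rw [hval]
  exact mul_ne_zero (mul_ne_zero (mul_ne_zero (pow_ne_zero _ h2) (pow_ne_zero _ h0))
    (pow_ne_zero _ (sub_ne_zero.mpr h1)))
    (pow_ne_zero _ (by intro h; exact hm1 (by linear_combination h)))

lemma cubic_subgroup (h2 : (2:K) ≠ 0) {lam : K} (h0 : lam ≠ 0) (h1 : lam ≠ 1) (hm1 : lam ≠ -1) :
    ∃ φ : (ZMod 4 × ZMod 2) →+ (cubicCurve (-(lam ^ 2)) (-1) 0 : WeierstrassCurve.Affine K).Point,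
      Function.Injective φ := by
  set E : WeierstrassCurve.Affine K := cubicCurve (-(lam ^ 2)) (-1) 0 with hE
  have hΔ : E.Δ ≠ 0 := cubic_Δ h2 h0 h1 hm1
  have h1p : 1 + lam ≠ 0 := fun h => hm1 (by linear_combination h)
  have hyne : lam * (1 + lam) ≠ 0 := mul_ne_zero h0 h1p
  have hp : E.Nonsingular lam (lam * (1 + lam)) := by
    apply nonsingular_of_Δ_ne_zero' _ _ hΔ
    rw [WeierstrassCurve.Affine.equation_iff]
    simp only [hE, cubicCurve]
    ring
  have h0' : E.Nonsingular 0 0 := by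
    apply nonsingular_of_Δ_ne_zero' _ _ hΔ
    rw [WeierstrassCurve.Affine.equation_iff]
    simp only [hE, cubicCurve]
    ring
  have hq : E.Nonsingular (-1) 0 := by
    apply nonsingular_of_Δ_ne_zero' _ _ hΔ
    rw [WeierstrassCurve.Affine.equation_iff]
    simp only [hE, cubicCurve]
    ring
  have hnegY : E.negY lam (lam * (1 + lam)) = -(lam * (1 + lam)) := by
    simp only [WeierstrassCurve.Affine.negY, hE, cubicCurve]
    ring
  have hy : lam * (1 + lam) ≠ E.negY lam (lam * (1 + lam)) := by
    rw [hnegY]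
    intro h
    have h2y : (2 : K) * (lam * (1 + lam)) = 0 := by linear_combination h
    rcases mul_eq_zero.mp h2y with h' | h'
    · exact absurd h' h2
    · exact hyne h'
  have hL : E.slope lam lam (lam * (1 + lam)) (lam * (1 + lam)) = 1 + lam := by
    rw [WeierstrassCurve.Affine.slope_of_Y_ne rfl hy,
      div_eq_iff (sub_ne_zero.mpr hy), hnegY]
    simp only [hE, cubicCurve]
    ring
  have hPP : WeierstrassCurve.Affine.Point.some _ _ hp + .some _ _ hp = .some _ _ h0' := by
    rw [WeierstrassCurve.Affine.Point.add_self_of_Y_ne hy]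
    apply some_eq_some
    · rw [hL]
      simp only [WeierstrassCurve.Affine.addX, hE, cubicCurve]
      ring
    · rw [WeierstrassCurve.Affine.addY, WeierstrassCurve.Affine.negAddY, hL]
      simp only [WeierstrassCurve.Affine.addX, WeierstrassCurve.Affine.negY, hE, cubicCurve]
      ring
  have hTT : WeierstrassCurve.Affine.Point.some _ _ h0' + .some _ _ h0' = 0 := by
    apply WeierstrassCurve.Affine.Point.add_self_of_Y_eq
    simp [hE, cubicCurve, WeierstrassCurve.Affine.negY]
  have hQQ : WeierstrassCurve.Affine.Point.some _ _ hq + .some _ _ hq = 0 := by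
    apply WeierstrassCurve.Affine.Point.add_self_of_Y_eq
    simp [hE, cubicCurve, WeierstrassCurve.Affine.negY]
  exact hom_of_points hp h0' hq hPP hTT hQQ hm1 (by
    intro h
    exact h2 (by linear_combination 2 * h))


end VCAux

theorem subgroup_Z4_Z2_iff {K : Type*} [Field K] (h2 : (2 : K) ≠ 0)
    (W : WeierstrassCurve.Affine K) (hW : W.Δ ≠ 0) :
    (∃ φ : (ZMod 4 × ZMod 2) →+ W.Point, Function.Injective φ) ↔
      ∃ lam : K, lam ≠ 0 ∧ lam ≠ 1 ∧ lam ≠ -1 ∧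
        ∃ C : WeierstrassCurve.VariableChange K,
          C • W = cubicCurve (-(lam ^ 2)) (-1) 0 := by
  constructor
  · rintro ⟨φ, hφ⟩
    have hφ0 : φ 0 = 0 := map_zero φ
    set P : W.Point := φ (1, 0) with hPdef
    set Q : W.Point := φ (0, 1) with hQdef
    set T : W.Point := φ (2, 0) with hTdef
    have hPne : P ≠ 0 := fun h => by
      have := hφ (h.trans hφ0.symm)
      rw [Prod.ext_iff] at this
      exact absurd this.1 (by decide)
    have hQne : Q ≠ 0 := fun h => by
      have := hφ (h.trans hφ0.symm)
      rw [Prod.ext_iff] at this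
      exact absurd this.2 (by decide)
    have hTne : T ≠ 0 := fun h => by
      have := hφ (h.trans hφ0.symm)
      rw [Prod.ext_iff] at this
      exact absurd this.1 (by decide)
    have hPPT : P + P = T := by
      rw [hPdef, hTdef, ← map_add]
      norm_num
    have hTT0 : T + T = 0 := by
      rw [hTdef, ← map_add, show ((2, 0) : ZMod 4 × ZMod 2) + (2, 0) = 0 by decide, hφ0]
    have hQQ0 : Q + Q = 0 := by
      rw [hQdef, ← map_add, show ((0, 1) : ZMod 4 × ZMod 2) + (0, 1) = 0 by decide, hφ0]
    have hQT : Q ≠ T := fun h => by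
      have := hφ h
      rw [Prod.ext_iff] at this
      exact absurd this.2 (by decide)
    obtain ⟨x₀, y₀, hT0, hTeq⟩ := VCAux.point_ne_zero_cases T hTne
    have hy₀ : y₀ = W.negY x₀ y₀ := by
      by_contra hc
      rw [hTeq, WeierstrassCurve.Affine.Point.add_self_of_Y_ne hc] at hTT0
      exact WeierstrassCurve.Affine.Point.some_ne_zero _ hTT0
    set C₁ : WeierstrassCurve.VariableChange K := ⟨1, x₀, -(W.a₁ / 2), y₀⟩ with hC₁
    set W₁ : WeierstrassCurve.Affine K := C₁ • W with hW₁
    have hΔ1 : W₁.Δ ≠ 0 := VCAux.vc_Δ_ne_zero C₁ hW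
    set ψ : W.Point →+ W₁.Point := VCAux.vcHom W C₁ hW with hψ
    have hψinj : Function.Injective ψ := VCAux.vcHom_injective hW
    have ha1 : W₁.a₁ = 0 := by
      rw [hW₁, WeierstrassCurve.variableChange_a₁, hC₁]
      simp only [inv_one, Units.val_one, one_mul]
      field_simp
      ring
    have ha3 : W₁.a₃ = 0 := by
      rw [hW₁, WeierstrassCurve.variableChange_a₃, hC₁]
      simp only [inv_one, Units.val_one, one_pow, one_mul]
      rw [WeierstrassCurve.Affine.negY] at hy₀
      linear_combination hy₀
    have hvx : VCAux.vcX C₁ x₀ = 0 := by simp [VCAux.vcX, hC₁]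
    have hvy : VCAux.vcY C₁ x₀ y₀ = 0 := by simp [VCAux.vcY, hC₁]
    have h₀₀ : W₁.Nonsingular 0 0 := by
      have h := VCAux.vc_nonsingular (C := C₁) hW hT0
      rwa [hvx, hvy] at h
    have hψT : ψ T = .some _ _ h₀₀ := by
      rw [hTeq]
      exact VCAux.some_eq_some hvx hvy
    have ha6 : W₁.a₆ = 0 := (WeierstrassCurve.Affine.equation_zero (W := W₁)).mp h₀₀.left
    -- the image of P
    have hψPne : ψ P ≠ 0 := fun h => hPne (hψinj (by rw [h, map_zero]))
    obtain ⟨xp, yp, hp, hPeq⟩ := VCAux.point_ne_zero_cases (ψ P) hψPne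
    have hPP1 : WeierstrassCurve.Affine.Point.some _ _ hp + .some _ _ hp = .some _ _ h₀₀ := by
      rw [← hPeq, ← map_add, hPPT, hψT]
    have hyp_ne : yp ≠ W₁.negY xp yp := by
      intro hc
      rw [WeierstrassCurve.Affine.Point.add_self_of_Y_eq hc] at hPP1
      exact WeierstrassCurve.Affine.Point.some_ne_zero _ hPP1.symm
    have hnegyp : W₁.negY xp yp = -yp := by
      rw [WeierstrassCurve.Affine.negY, ha1, ha3]; ring
    have hypne0 : yp ≠ 0 := by
      intro h
      exact hyp_ne (by rw [hnegyp, h, neg_zero])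
    -- image of Q
    have hψQne : ψ Q ≠ 0 := fun h => hQne (hψinj (by rw [h, map_zero]))
    obtain ⟨xq, yq, hq, hQeq⟩ := VCAux.point_ne_zero_cases (ψ Q) hψQne
    have hQQ1 : WeierstrassCurve.Affine.Point.some _ _ hq + .some _ _ hq = 0 := by
      rw [← hQeq, ← map_add, hQQ0, map_zero]
    have hyq : yq = W₁.negY xq yq := by
      by_contra hc
      rw [WeierstrassCurve.Affine.Point.add_self_of_Y_ne hc] at hQQ1
      exact WeierstrassCurve.Affine.Point.some_ne_zero _ hQQ1
    have hyq0 : yq = 0 := by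
      rw [WeierstrassCurve.Affine.negY, ha1, ha3] at hyq
      have h2y : (2 : K) * yq = 0 := by linear_combination hyq
      rcases mul_eq_zero.mp h2y with h | h
      · exact absurd h h2
      · exact h
    have hxqne0 : xq ≠ 0 := by
      intro h
      apply hQT
      apply hψinj
      rw [hQeq, hψT]
      exact VCAux.some_eq_some h hyq0
    -- algebraic relations on W₁
    have E1 : yp ^ 2 = xp ^ 3 + W₁.a₂ * xp ^ 2 + W₁.a₄ * xp := by
      have e := (W₁.equation_iff xp yp).mp hp.left
      linear_combination e - xp * yp * ha1 - yp * ha3 + ha6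
    have E2 : xq ^ 2 + W₁.a₂ * xq + W₁.a₄ = 0 := by
      have e := (W₁.equation_iff xq yq).mp hq.left
      rw [hyq0] at e
      have e2 : xq * (xq ^ 2 + W₁.a₂ * xq + W₁.a₄) = 0 := by
        linear_combination -e - ha6
      exact (mul_eq_zero.mp e2).resolve_left hxqne0
    -- extract the doubling condition
    set L : K := W₁.slope xp xp yp yp with hLdef
    have hPP2 := hPP1
    rw [WeierstrassCurve.Affine.Point.add_self_of_Y_ne hyp_ne] at hPP2
    obtain ⟨haddX, -⟩ := VCAux.some_inj hPP2
    have hL2 : L ^ 2 = W₁.a₂ + 2 * xp := by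
      rw [WeierstrassCurve.Affine.addX, ha1] at haddX
      linear_combination haddX
    have hslope_eq : L * (2 * yp) = 3 * xp ^ 2 + 2 * W₁.a₂ * xp + W₁.a₄ := by
      rw [hLdef, WeierstrassCurve.Affine.slope_of_Y_ne rfl hyp_ne, hnegyp, ha1]
      have hden : yp - -yp = 2 * yp := by ring
      rw [hden]
      field_simp
      ring
    have E3 : (3 * xp ^ 2 + 2 * W₁.a₂ * xp + W₁.a₄) ^ 2 =
        (W₁.a₂ + 2 * xp) * (2 * yp) ^ 2 := by
      linear_combination (-(3 * xp ^ 2 + 2 * W₁.a₂ * xp + W₁.a₄ + L * (2 * yp))) * hslope_eq +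
        (2 * yp) ^ 2 * hL2
    have hsq : (xp ^ 2 - W₁.a₄) ^ 2 = 0 := by
      linear_combination E3 + 4 * (W₁.a₂ + 2 * xp) * E1
    have E4 : xp ^ 2 = W₁.a₄ := sub_eq_zero.mp (pow_eq_zero_iff two_ne_zero |>.mp hsq)
    -- the second root
    set s : K := -xq - W₁.a₂ with hs
    have hprod : xq * s = W₁.a₄ := by rw [hs]; linear_combination -E2
    have ha2 : W₁.a₂ = -xq - s := by rw [hs]; ring
    have hxps : xp ^ 2 = xq * s := by rw [E4, ← hprod]
    have E1b : yp ^ 2 = 2 * xp ^ 3 + W₁.a₂ * xp ^ 2 := by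
      linear_combination E1 - xp * E4
    have E6 : yp ^ 2 = -xq * (xp - s) ^ 2 := by
      linear_combination E1b + xp ^ 2 * ha2 + (2 * xp - s) * hxps
    have E7 : yp ^ 2 = -s * (xp - xq) ^ 2 := by
      linear_combination E1b + xp ^ 2 * ha2 + (2 * xp - xq) * hxps
    have hxp_s : xp - s ≠ 0 := by
      intro h
      apply hypne0
      have : yp ^ 2 = 0 := by rw [E6, h]; ring
      exact pow_eq_zero_iff two_ne_zero |>.mp this
    have hxp_q : xp - xq ≠ 0 := by
      intro h
      apply hypne0
      have : yp ^ 2 = 0 := by rw [E7, h]; ring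
      exact pow_eq_zero_iff two_ne_zero |>.mp this
    have hs_ne : s ≠ 0 := by
      intro h
      apply hypne0
      have hxp0 : xp ^ 2 = 0 := by rw [hxps, h]; ring
      have hxp0' : xp = 0 := pow_eq_zero_iff two_ne_zero |>.mp hxp0
      have : yp ^ 2 = 0 := by rw [E1b, hxp0']; ring
      exact pow_eq_zero_iff two_ne_zero |>.mp this
    set a : K := yp / (xp - s) with hadef
    set b : K := yp / (xp - xq) with hbdef
    have hane : a ≠ 0 := div_ne_zero hypne0 hxp_s
    have hbne : b ≠ 0 := div_ne_zero hypne0 hxp_q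
    have ha2a : a ^ 2 = -xq := by
      rw [hadef, div_pow, E6, mul_div_cancel_right₀ _ (pow_ne_zero 2 hxp_s)]
    have hb2b : b ^ 2 = -s := by
      rw [hbdef, div_pow, E7, mul_div_cancel_right₀ _ (pow_ne_zero 2 hxp_q)]
    set lam : K := b / a with hlamdef
    have hlam0 : lam ≠ 0 := div_ne_zero hbne hane
    have hlam_sq : lam ^ 2 * xq = s := by
      have h1' : lam ^ 2 * a ^ 2 = b ^ 2 := by
        rw [hlamdef, div_pow, div_mul_cancel₀ _ (pow_ne_zero 2 hane)]
      rw [ha2a, hb2b] at h1'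
      linear_combination -h1'
    have hxq_ne_s : xq ≠ s := by
      intro h
      apply hΔ1
      have ha2' : W₁.a₂ = -2 * xq := by rw [ha2, ← h]; ring
      have ha4' : W₁.a₄ = xq ^ 2 := by rw [← hprod, ← h]; ring
      have : W₁.Δ = 16 * W₁.a₂ ^ 2 * W₁.a₄ ^ 2 - 64 * W₁.a₄ ^ 3 := by
        simp only [WeierstrassCurve.Δ, WeierstrassCurve.b₂, WeierstrassCurve.b₄,
          WeierstrassCurve.b₆, WeierstrassCurve.b₈, ha1, ha3, ha6]
        ring
      rw [this, ha2', ha4']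
      ring
    have hlam1 : lam ≠ 1 := by
      intro h
      apply hxq_ne_s
      rw [h] at hlam_sq
      linear_combination hlam_sq
    have hlamm1 : lam ≠ -1 := by
      intro h
      apply hxq_ne_s
      rw [h] at hlam_sq
      linear_combination hlam_sq
    clear_value L s a b lam
    refine ⟨lam, hlam0, hlam1, hlamm1,
      (⟨Units.mk0 a hane, 0, 0, 0⟩ : WeierstrassCurve.VariableChange K) * C₁, ?_⟩
    rw [mul_smul, ← hW₁]
    have hainv : ((Units.mk0 a hane)⁻¹ : Kˣ) = (Units.mk0 a hane)⁻¹ := rfl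
    ext
    · rw [WeierstrassCurve.variableChange_a₁, ha1]
      simp [cubicCurve]
    · rw [WeierstrassCurve.variableChange_a₂]
      simp only [cubicCurve, Units.val_inv_eq_inv_val, Units.val_mk0]
      field_simp
      linear_combination ha2 - (lam ^ 2 + 1) * ha2a + hlam_sq
    · rw [WeierstrassCurve.variableChange_a₃, ha3]
      simp [cubicCurve]
    · rw [WeierstrassCurve.variableChange_a₄]
      simp only [cubicCurve, Units.val_inv_eq_inv_val, Units.val_mk0]
      field_simp
      linear_combination -hprod - xq * hlam_sq - lam ^ 2 * (a ^ 2 - xq) * ha2a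
    · rw [WeierstrassCurve.variableChange_a₆, ha6]
      simp [cubicCurve]
  · rintro ⟨lam, h0, h1, hm1, C, hC⟩
    have hex : ∃ φ : (ZMod 4 × ZMod 2) →+
        (cubicCurve (-(lam ^ 2)) (-1) 0 : WeierstrassCurve.Affine K).Point,
        Function.Injective φ := VCAux.cubic_subgroup h2 h0 h1 hm1
    rw [← hC] at hex
    obtain ⟨φ₀, hφ₀⟩ := hex
    have hΔE : (C • W).Δ ≠ 0 := VCAux.vc_Δ_ne_zero C hW
    have hWE : (C⁻¹ • (C • W)) = W := inv_smul_smul C W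
    have hex2 : ∃ φ : (ZMod 4 × ZMod 2) →+
        ((C⁻¹ • (C • W))).toAffine.Point, Function.Injective φ :=
      ⟨(VCAux.vcHom (C • W) C⁻¹ hΔE).comp φ₀,
        (VCAux.vcHom_injective hΔE).comp hφ₀⟩
    rw [hWE] at hex2
    exact hex2
end

section
/- Let K be a field of characteristic not 2, λ ∈ K \ {0, ±1}, and E: y² = (x+λ²)(x+1)x. The 2-torsion point W₃ = (0,0) is divisible by 4 in E(K) if and only if there exists c ∈ K with c ∉ {0, ±1, ±1±√2, ±√−1} such that λ = ±((c−1/c)/2)², i.e., λ² = ((c−1/c)/2)⁴. -/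
/-- `c` avoids the exceptional set `{0, ±1, ±1±√2, ±√−1}`: equivalently `c ≠ 0`, `c ≠ ±1`,
`((c−1/c)/2)² ≠ 1` and `((c−1/c)/2)² ≠ −1`. -/
def GoodParam {K : Type*} [Field K] (c : K) : Prop :=
  c ≠ 0 ∧ c ≠ 1 ∧ c ≠ -1 ∧ ((c - 1 / c) / 2) ^ 2 ≠ 1 ∧ ((c - 1 / c) / 2) ^ 2 ≠ -1

namespace W3aux

open WeierstrassCurve.Affine

variable {K : Type*} [Field K]

open Classical

lemma some_eq_some {W : WeierstrassCurve.Affine K} {x₁ y₁ x₂ y₂ : K}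
    (h₁ : W.Nonsingular x₁ y₁) (h₂ : W.Nonsingular x₂ y₂) (hx : x₁ = x₂) (hy : y₁ = y₂) :
    Point.some _ _ h₁ = Point.some _ _ h₂ := by subst hx; subst hy; rfl

variable (lam : K)

lemma Wa1 : (cubicCurve (-(lam ^ 2)) (-1) (0 : K)).a₁ = 0 := rfl

lemma Wa3 : (cubicCurve (-(lam ^ 2)) (-1) (0 : K)).a₃ = 0 := rfl

lemma Wa2 : (cubicCurve (-(lam ^ 2)) (-1) (0 : K)).a₂ = lam ^ 2 + 1 := by
  show -(-(lam ^ 2) + -1 + 0) = _; ring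

lemma Wa4 : (cubicCurve (-(lam ^ 2)) (-1) (0 : K)).a₄ = lam ^ 2 := by
  show -(lam ^ 2) * -1 + -1 * 0 + 0 * -(lam ^ 2) = _; ring

lemma Wa6 : (cubicCurve (-(lam ^ 2)) (-1) (0 : K)).a₆ = 0 := by
  show -(-(lam ^ 2) * -1 * 0) = _; ring

lemma WnegY (x y : K) : (cubicCurve (-(lam ^ 2)) (-1) 0).negY x y = -y := by
  rw [negY, Wa1, Wa3]; ring

lemma Wyneg {x y : K} (h2 : (2 : K) ≠ 0) (hy : y ≠ 0) :
    y ≠ (cubicCurve (-(lam ^ 2)) (-1) 0).negY x y := by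
  rw [WnegY]
  intro h
  exact hy ((mul_eq_zero.mp (show (2 : K) * y = 0 by linear_combination h)).resolve_left h2)

lemma Wns {x y : K} (h2 : (2 : K) ≠ 0) (hy : y ≠ 0)
    (heq : y ^ 2 = x ^ 3 + (lam ^ 2 + 1) * x ^ 2 + lam ^ 2 * x) :
    (cubicCurve (-(lam ^ 2)) (-1) 0).Nonsingular x y := by
  rw [nonsingular_iff]
  refine ⟨?_, Or.inr ?_⟩
  · rw [equation_iff, Wa1, Wa2, Wa3, Wa4, Wa6]; linear_combination heq
  · rw [Wa1, Wa3]
    intro h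
    exact hy ((mul_eq_zero.mp (show (2 : K) * y = 0 by linear_combination h)).resolve_left h2)

lemma Weq {x y : K} (h : (cubicCurve (-(lam ^ 2)) (-1) 0).Nonsingular x y) :
    y ^ 2 = x ^ 3 + (lam ^ 2 + 1) * x ^ 2 + lam ^ 2 * x := by
  have he := ((nonsingular_iff _ _).mp h).1
  rw [equation_iff, Wa1, Wa2, Wa3, Wa4, Wa6] at he
  linear_combination he

lemma Wslope {x y : K} (h2 : (2 : K) ≠ 0) (hy : y ≠ 0) :
    (cubicCurve (-(lam ^ 2)) (-1) 0).slope x x y y =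
      (3 * x ^ 2 + 2 * (lam ^ 2 + 1) * x + lam ^ 2) / (2 * y) := by
  rw [slope_of_Y_ne rfl (Wyneg lam h2 hy), WnegY, Wa1, Wa2, Wa4]
  congr 1 <;> ring

lemma WaddX_sq {x y : K} (h2 : (2 : K) ≠ 0) (hy : y ≠ 0)
    (heq : y ^ 2 = x ^ 3 + (lam ^ 2 + 1) * x ^ 2 + lam ^ 2 * x) :
    (cubicCurve (-(lam ^ 2)) (-1) 0).addX x x
        ((cubicCurve (-(lam ^ 2)) (-1) 0).slope x x y y) =
      ((x ^ 2 - lam ^ 2) / (2 * y)) ^ 2 := by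
  have h2y : (2 : K) * y ≠ 0 := mul_ne_zero h2 hy
  rw [Wslope lam h2 hy]
  simp only [addX, Wa1, Wa2]
  field_simp
  ring_nf
  linear_combination (-4 * (lam ^ 2 + 1 + 2 * x)) * heq

lemma WaddX1_sq {x y : K} (h2 : (2 : K) ≠ 0) (hy : y ≠ 0)
    (heq : y ^ 2 = x ^ 3 + (lam ^ 2 + 1) * x ^ 2 + lam ^ 2 * x) :
    (cubicCurve (-(lam ^ 2)) (-1) 0).addX x x
        ((cubicCurve (-(lam ^ 2)) (-1) 0).slope x x y y) + 1 =
      ((x ^ 2 + 2 * x + lam ^ 2) / (2 * y)) ^ 2 := by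
  have h2y : (2 : K) * y ≠ 0 := mul_ne_zero h2 hy
  rw [Wslope lam h2 hy]
  simp only [addX, Wa1, Wa2]
  field_simp
  ring_nf
  linear_combination (-4 * (lam ^ 2 + 2 * x)) * heq

lemma backward (h2 : (2 : K) ≠ 0) (a b : K) (hb : b ^ 2 = a ^ 2 + 1) (hl2 : lam ^ 2 = a ^ 4)
    (ha : a ≠ 0) (hb0 : b ≠ 0) (hab : a + b ≠ 0) (ha1 : 1 + a ≠ 0) (hb1 : 1 + b ≠ 0)
    (hW : (cubicCurve (-(lam ^ 2)) (-1) 0).Nonsingular 0 0) :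
    ∃ R : (cubicCurve (-(lam ^ 2)) (-1) 0).Point, 4 • R = Point.some _ _ hW := by
  have hy0 : a * b * (a + b) * (1 + a) * (1 + b) ≠ 0 :=
    mul_ne_zero (mul_ne_zero (mul_ne_zero (mul_ne_zero ha hb0) hab) ha1) hb1
  have heqR : (a * b * (a + b) * (1 + a) * (1 + b)) ^ 2 =
      (a * (a + b) * (1 + b)) ^ 3 + (lam ^ 2 + 1) * (a * (a + b) * (1 + b)) ^ 2 +
        lam ^ 2 * (a * (a + b) * (1 + b)) := by
    simp only [hl2]
    linear_combination (a^2*b^2 + (2)*a^2*b^3 + a^2*b^4 + (2)*a^3*b + (4)*a^3*b^2 + (3)*a^3*b^3 + a^3*b^4 + a^4 + (2)*a^4*b + (3)*a^4*b^2 + (3)*a^4*b^3 + a^4*b^4 + (2)*a^5*b + (4)*a^5*b^2 + (2)*a^5*b^3 + a^6 + (2)*a^6*b + a^6*b^2) * hb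
  have hnsR := Wns lam h2 hy0 heqR
  have hyQ : a ^ 2 * b ^ 2 ≠ 0 := mul_ne_zero (pow_ne_zero 2 ha) (pow_ne_zero 2 hb0)
  have heqQ : (a ^ 2 * b ^ 2) ^ 2 =
      (a ^ 2) ^ 3 + (lam ^ 2 + 1) * (a ^ 2) ^ 2 + lam ^ 2 * (a ^ 2) := by
    simp only [hl2]
    linear_combination (a^4 + a^4*b^2 + a^6) * hb
  have hnsQ := Wns lam h2 hyQ heqQ
  have hsR : (cubicCurve (-(lam ^ 2)) (-1) 0).slope (a * (a + b) * (1 + b)) (a * (a + b) * (1 + b))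
      (a * b * (a + b) * (1 + a) * (1 + b)) (a * b * (a + b) * (1 + a) * (1 + b)) =
      a + b + a * b := by
    rw [Wslope lam h2 hy0, div_eq_iff (mul_ne_zero h2 hy0)]
    simp only [hl2]
    linear_combination ((-2)*a*b + (-2)*a*b^2 + (-2)*a^2 + (-2)*a^2*b + (-1)*a^2*b^2 + (-2)*a^3*b + (-2)*a^3*b^2 + (-2)*a^4 + (-2)*a^4*b) * hb
  have hXR : (cubicCurve (-(lam ^ 2)) (-1) 0).addX (a * (a + b) * (1 + b)) (a * (a + b) * (1 + b))
      (a + b + a * b) = a ^ 2 := by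
    simp only [addX, Wa1, Wa2]
    simp only [hl2]
    linear_combination ((1) + a^2) * hb
  have hYR : (cubicCurve (-(lam ^ 2)) (-1) 0).addY (a * (a + b) * (1 + b)) (a * (a + b) * (1 + b))
      (a * b * (a + b) * (1 + a) * (1 + b)) (a + b + a * b) = a ^ 2 * b ^ 2 := by
    simp only [addY, negAddY, addX, negY, Wa1, Wa2, Wa3]
    simp only [hl2]
    linear_combination ((-1)*b + (-1)*a + (-1)*a*b + (-1)*a^2*b + (-1)*a^3 + (-1)*a^3*b) * hb
  have hsQ : (cubicCurve (-(lam ^ 2)) (-1) 0).slope (a ^ 2) (a ^ 2) (a ^ 2 * b ^ 2)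
      (a ^ 2 * b ^ 2) = b ^ 2 := by
    rw [Wslope lam h2 hyQ, div_eq_iff (mul_ne_zero h2 hyQ)]
    simp only [hl2]
    linear_combination ((-2)*a^2 + (-2)*a^2*b^2 + (-2)*a^4) * hb
  have hXQ : (cubicCurve (-(lam ^ 2)) (-1) 0).addX (a ^ 2) (a ^ 2) (b ^ 2) = 0 := by
    simp only [addX, Wa1, Wa2]
    simp only [hl2]
    linear_combination ((1) + b^2 + a^2) * hb
  have hYQ : (cubicCurve (-(lam ^ 2)) (-1) 0).addY (a ^ 2) (a ^ 2) (a ^ 2 * b ^ 2) (b ^ 2) = 0 := by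
    simp only [addY, negAddY, addX, negY, Wa1, Wa2, Wa3]
    simp only [hl2]
    linear_combination ((-1)*b^2 + (-1)*b^4 + (-1)*a^2*b^2) * hb
  refine ⟨Point.some _ _ hnsR, ?_⟩
  have e1 : Point.some _ _ hnsR + Point.some _ _ hnsR = Point.some _ _ hnsQ := by
    rw [Point.add_self_of_Y_ne (Wyneg lam h2 hy0)]
    exact some_eq_some _ _ (by rw [hsR]; exact hXR) (by rw [hsR]; exact hYR)
  have e2 : Point.some _ _ hnsQ + Point.some _ _ hnsQ = Point.some _ _ hW := by
    rw [Point.add_self_of_Y_ne (Wyneg lam h2 hyQ)]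
    exact some_eq_some _ _ (by rw [hsQ]; exact hXQ) (by rw [hsQ]; exact hYQ)
  rw [show (4 : ℕ) = 2 * 2 from rfl, mul_smul, two_smul ℕ (Point.some _ _ hnsR), e1, two_smul, e2]

end W3aux

open Classical in
open WeierstrassCurve.Affine W3aux in
theorem W3_div_four_iff {K : Type*} [Field K] (h2 : (2 : K) ≠ 0)
    (lam : K) (h0 : lam ≠ 0) (h1 : lam ≠ 1) (hm1 : lam ≠ -1)
    (hW : (cubicCurve (-(lam ^ 2)) (-1) 0).Nonsingular 0 0) :
    (∃ R : (cubicCurve (-(lam ^ 2)) (-1) 0).Point,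
        4 • R = WeierstrassCurve.Affine.Point.some _ _ hW) ↔
      ∃ c : K, GoodParam c ∧
        (lam = ((c - 1 / c) / 2) ^ 2 ∨ lam = -(((c - 1 / c) / 2) ^ 2)) := by
  constructor
  · rintro ⟨R, hR4⟩
    rcases R with _ | @⟨x, y, hns⟩
    · rw [← Point.zero_def, smul_zero] at hR4
      exact absurd hR4.symm (Point.some_ne_zero hW)
    have hy : y ≠ 0 := by
      intro h0'
      refine Point.some_ne_zero hW ?_
      rw [← hR4, show (4 : ℕ) = 2 * 2 from rfl, mul_smul, two_smul ℕ (Point.some _ _ hns),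
        Point.add_self_of_Y_eq (by rw [WnegY, h0', neg_zero]), smul_zero]
    have hyne := Wyneg lam (x := x) h2 hy
    have hQns := nonsingular_add hns hns fun hxy => hyne hxy.right
    have e1 : Point.some _ _ hns + Point.some _ _ hns = Point.some _ _ hQns :=
      Point.add_self_of_Y_ne hyne
    have hQeq := Weq lam hQns
    have hηne : (cubicCurve (-(lam ^ 2)) (-1) 0).addY x x y
        ((cubicCurve (-(lam ^ 2)) (-1) 0).slope x x y y) ≠ 0 := by
      intro h0'
      refine Point.some_ne_zero hW ?_
      rw [← hR4, show (4 : ℕ) = 2 * 2 from rfl, mul_smul, two_smul ℕ (Point.some _ _ hns), e1,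
        two_smul, Point.add_self_of_Y_eq (by rw [WnegY, h0', neg_zero])]
    have hηne2 := Wyneg lam
      (x := (cubicCurve (-(lam ^ 2)) (-1) 0).addX x x ((cubicCurve (-(lam ^ 2)) (-1) 0).slope x x y y))
      h2 hηne
    have e2 : Point.some _ _ hQns + Point.some _ _ hQns =
        Point.some _ _ (nonsingular_add hQns hQns fun hxy => hηne2 hxy.right) :=
      Point.add_self_of_Y_ne hηne2
    have hstep : (4 : ℕ) • Point.some _ _ hns =
        Point.some _ _ (nonsingular_add hQns hQns fun hxy => hηne2 hxy.right) := by
      rw [show (4 : ℕ) = 2 * 2 from rfl, mul_smul, two_smul ℕ (Point.some _ _ hns), e1, two_smul, e2]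
    rw [hstep] at hR4
    obtain ⟨hX0, -⟩ := Point.some.inj hR4
    rw [WaddX_sq lam h2 hηne hQeq] at hX0
    have hxi2 : ((cubicCurve (-(lam ^ 2)) (-1) 0).addX x x
        ((cubicCurve (-(lam ^ 2)) (-1) 0).slope x x y y)) ^ 2 = lam ^ 2 := by
      have hd := pow_eq_zero_iff (two_ne_zero) |>.mp hX0
      rw [div_eq_zero_iff] at hd
      rcases hd with hd | hd
      · exact sub_eq_zero.mp hd
      · exact absurd hd (mul_ne_zero h2 hηne)
    set ξ := (cubicCurve (-(lam ^ 2)) (-1) 0).addX x x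
        ((cubicCurve (-(lam ^ 2)) (-1) 0).slope x x y y) with hξdef
    set A := (x ^ 2 - lam ^ 2) / (2 * y) with hAdef
    set Bv := (x ^ 2 + 2 * x + lam ^ 2) / (2 * y) with hBdef
    have hA : ξ = A ^ 2 := WaddX_sq lam h2 hy (Weq lam hns)
    have hB : ξ + 1 = Bv ^ 2 := WaddX1_sq lam h2 hy (Weq lam hns)
    have hxiv : ξ = lam ∨ ξ = -lam := by
      have hfac : (ξ - lam) * (ξ + lam) = 0 := by linear_combination hxi2
      rcases mul_eq_zero.mp hfac with h | h
      · exact Or.inl (sub_eq_zero.mp h)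
      · exact Or.inr (eq_neg_of_add_eq_zero_left h)
    have hA0 : A ≠ 0 := by
      intro h
      apply h0
      have hz : ξ = 0 := by rw [hA, h]; ring
      rcases hxiv with hv | hv
      · rw [← hv]; exact hz
      · have h' : -lam = 0 := by rw [← hv]; exact hz
        exact neg_eq_zero.mp h'
    have hprod : (Bv - A) * (A + Bv) = 1 := by linear_combination hA - hB
    have hc0' : A + Bv ≠ 0 := by
      intro h; rw [h, mul_zero] at hprod; exact one_ne_zero hprod.symm
    have hinv : 1 / (A + Bv) = Bv - A := by
      rw [eq_comm, eq_div_iff hc0']; linear_combination hprod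
    have hhalf : (A + Bv - 1 / (A + Bv)) / 2 = A := by
      rw [hinv, div_eq_iff h2]; ring
    refine ⟨A + Bv, ⟨hc0', ?_, ?_, ?_, ?_⟩, ?_⟩
    · intro h
      apply hA0
      have h' : Bv - A = 1 := by rw [← hinv, h]; norm_num
      have h2A : 2 * A = 0 := by linear_combination h - h'
      exact (mul_eq_zero.mp h2A).resolve_left h2
    · intro h
      apply hA0
      have h' : Bv - A = -1 := by rw [← hinv, h]; norm_num
      have h2A : 2 * A = 0 := by linear_combination h - h'
      exact (mul_eq_zero.mp h2A).resolve_left h2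
    · rw [hhalf, ← hA]
      rcases hxiv with hv | hv
      · rw [hv]; exact h1
      · rw [hv]; intro h; exact hm1 (by linear_combination -h)
    · rw [hhalf, ← hA]
      rcases hxiv with hv | hv
      · rw [hv]; exact hm1
      · rw [hv]; intro h; exact h1 (by linear_combination -h)
    · rcases hxiv with hv | hv
      · exact Or.inl (by rw [hhalf, ← hA]; exact hv.symm)
      · exact Or.inr (by rw [hhalf, ← hA, hv, neg_neg])
  · rintro ⟨c, ⟨hc0, hc1, hcm1, hs1, hsm1⟩, hcase⟩
    have hb : ((c + 1 / c) / 2) ^ 2 = ((c - 1 / c) / 2) ^ 2 + 1 := by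
      field_simp
      ring
    have ha : (c - 1 / c) / 2 ≠ 0 := by
      intro h
      have hnum : c - 1 / c = 0 := by
        rcases div_eq_zero_iff.mp h with h' | h'
        · exact h'
        · exact absurd h' h2
      have hcinv : c * (1 / c) = 1 := by rw [one_div, mul_inv_cancel₀ hc0]
      have hmul : (c - 1 / c) * c = 0 := by rw [hnum, zero_mul]
      have hcc : (c - 1) * (c + 1) = 0 := by linear_combination hmul + hcinv
      rcases mul_eq_zero.mp hcc with h' | h'
      · exact hc1 (by linear_combination h')
      · exact hcm1 (by linear_combination h')
    exact backward lam h2 ((c - 1 / c) / 2) ((c + 1 / c) / 2) hb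
      (by rcases hcase with h | h <;> rw [h] <;> ring)
      ha
      (by intro h
          apply hsm1
          have hbsq : ((c + 1 / c) / 2) ^ 2 = 0 := by rw [h]; ring
          linear_combination hbsq - hb)
      (by have hsum : (c - 1 / c) / 2 + (c + 1 / c) / 2 = c := by
            field_simp; ring
          rw [hsum]; exact hc0)
      (by intro h
          apply hs1
          have h' : (c - 1 / c) / 2 = -1 := by linear_combination h
          rw [h']; ring)
      (by intro h
          apply ha
          refine pow_eq_zero_iff (two_ne_zero) |>.mp ?_
          linear_combination (-1 : K) * hb + ((c + 1 / c) / 2 - 1) * h)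
      hW
end

section
/- Let K be a field of characteristic not 2, E: y² = (x−α₁)(x−α₂)(x−α₃) with distinct αᵢ ∈ K. A point P = (x₀, y₀) ∈ E(K) has order 3 if and only if one can choose square roots rᵢ = √(x₀ − αᵢ) ∈ K (i = 1,2,3) such that r₁r₂ + r₂r₃ + r₃r₁ = 0. -/
open WeierstrassCurve.Affine WeierstrassCurve.Affine.Point

lemma some_eq_some_aux {K : Type*} [Field K] {W : WeierstrassCurve.Affine K}
    {x₁ y₁ x₂ y₂ : K} (hx : x₁ = x₂) (hy : y₁ = y₂)
    (h₁ : W.Nonsingular x₁ y₁) (h₂ : W.Nonsingular x₂ y₂) :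
    Point.some x₁ y₁ h₁ = Point.some x₂ y₂ h₂ := by subst hx; subst hy; rfl

open Classical in
theorem order_three_iff {K : Type*} [Field K] (h2 : (2 : K) ≠ 0)
    (α₁ α₂ α₃ : K) (h12 : α₁ ≠ α₂) (h13 : α₁ ≠ α₃) (h23 : α₂ ≠ α₃)
    (x₀ y₀ : K) (hP : (cubicCurve α₁ α₂ α₃).Nonsingular x₀ y₀) :
    addOrderOf (WeierstrassCurve.Affine.Point.some x₀ y₀ hP) = 3 ↔
      ∃ r₁ r₂ r₃ : K, r₁ ^ 2 = x₀ - α₁ ∧ r₂ ^ 2 = x₀ - α₂ ∧ r₃ ^ 2 = x₀ - α₃ ∧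
        r₁ * r₂ + r₂ * r₃ + r₃ * r₁ = 0 := by
  haveI : Fact (Nat.Prime 3) := ⟨by norm_num⟩
  let W : WeierstrassCurve.Affine K := cubicCurve α₁ α₂ α₃
  have hW : W = cubicCurve α₁ α₂ α₃ := rfl
  have heq : y₀ ^ 2 = (x₀ - α₁) * ((x₀ - α₂) * (x₀ - α₃)) := by
    have := hP.1
    rw [equation_iff] at this
    simp only [hW, cubicCurve] at this
    linear_combination this
  have hneg : W.negY x₀ y₀ = -y₀ := by simp [negY, hW, cubicCurve]
  set P := Point.some x₀ y₀ hP with hPdef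
  -- the key scalar condition
  set N : K := 3 * x₀ ^ 2 - 2 * (α₁ + α₂ + α₃) * x₀ + (α₁ * α₂ + α₂ * α₃ + α₃ * α₁) with hN
  constructor
  · intro h
    -- 3 • P = 0
    have h3 : (3 : ℕ) • P = 0 := by rw [← h]; exact addOrderOf_nsmul_eq_zero P
    have hPP : P + P = -P := by
      have h3' : P + P + P = 0 := by
        rw [← h3]; rw [show (3 : ℕ) • P = P + P + P by rw [succ_nsmul, two_nsmul]]
      exact eq_neg_of_add_eq_zero_left h3'
    have hy0 : y₀ ≠ 0 := by
      intro hy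
      have hyn : y₀ = W.negY x₀ y₀ := by rw [hneg, hy, _root_.neg_zero]
      rw [add_self_of_Y_eq hyn] at hPP
      exact some_ne_zero hP (neg_eq_zero.mp hPP.symm)
    have hyn : y₀ ≠ W.negY x₀ y₀ := by
      rw [hneg]
      intro hc
      exact hy0 (by
        have : 2 * y₀ = 0 := by linear_combination hc
        exact (mul_eq_zero.mp this).resolve_left h2)
    have hslope : W.slope x₀ x₀ y₀ y₀ = N / (2 * y₀) := by
      rw [slope_of_Y_ne rfl hyn, hneg]
      simp only [hW, cubicCurve, hN]
      ring_nf
    rw [add_self_of_Y_ne hyn, neg_some, Point.some.injEq] at hPP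
    have hx := hPP.1
    rw [addX, hslope] at hx
    simp only [hW, cubicCurve] at hx
    have hkey : N ^ 2 = 4 * y₀ ^ 2 * (3 * x₀ - (α₁ + α₂ + α₃)) := by
      field_simp at hx
      linear_combination hx
    refine ⟨((x₀ - α₁) * ((x₀ - α₂) + (x₀ - α₃)) - (x₀ - α₂) * (x₀ - α₃)) / (2 * y₀),
      ((x₀ - α₂) * ((x₀ - α₁) + (x₀ - α₃)) - (x₀ - α₁) * (x₀ - α₃)) / (2 * y₀),
      ((x₀ - α₃) * ((x₀ - α₁) + (x₀ - α₂)) - (x₀ - α₁) * (x₀ - α₂)) / (2 * y₀), ?_, ?_, ?_, ?_⟩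
    · field_simp
      linear_combination hkey + (4 * ((x₀ - α₂) + (x₀ - α₃))) * heq
    · field_simp
      linear_combination hkey + (4 * ((x₀ - α₁) + (x₀ - α₃))) * heq
    · field_simp
      linear_combination hkey + (4 * ((x₀ - α₁) + (x₀ - α₂))) * heq
    · field_simp
      linear_combination -hkey - (4 * ((x₀ - α₁) + (x₀ - α₂) + (x₀ - α₃))) * heq
  · rintro ⟨r₁, r₂, r₃, h1, h2', h3', hs⟩
    -- each rᵢ is nonzero
    have hr : r₁ ≠ 0 ∧ r₂ ≠ 0 ∧ r₃ ≠ 0 := by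
      by_contra hc
      push_neg at hc
      rcases eq_or_ne r₁ 0 with e1 | e1
      · have : r₂ * r₃ = 0 := by rw [e1] at hs; linear_combination hs
        rcases mul_eq_zero.mp this with e | e
        · exact h12 (by rw [e1] at h1; rw [e] at h2'; linear_combination h1 - h2')
        · exact h13 (by rw [e1] at h1; rw [e] at h3'; linear_combination h1 - h3')
      rcases eq_or_ne r₂ 0 with e2 | e2
      · have : r₁ * r₃ = 0 := by rw [e2] at hs; linear_combination hs
        rcases mul_eq_zero.mp this with e | e
        · exact h12 (by rw [e2] at h2'; rw [e] at h1; linear_combination h1 - h2')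
        · exact h23 (by rw [e2] at h2'; rw [e] at h3'; linear_combination h2' - h3')
      rcases eq_or_ne r₃ 0 with e3 | e3
      · have : r₁ * r₂ = 0 := by rw [e3] at hs; linear_combination hs
        rcases mul_eq_zero.mp this with e | e
        · exact h13 (by rw [e3] at h3'; rw [e] at h1; linear_combination h1 - h3')
        · exact h23 (by rw [e3] at h3'; rw [e] at h2'; linear_combination h2' - h3')
      exact e3 (hc e1 e2)
    obtain ⟨hr1, hr2, hr3⟩ := hr
    have hy0 : y₀ ≠ 0 := by
      intro hy
      have : (r₁ * r₂ * r₃) ^ 2 = 0 := by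
        rw [hy] at heq
        linear_combination -heq + (r₂ ^ 2 * r₃ ^ 2) * h1 + ((x₀ - α₁) * r₃ ^ 2) * h2' +
          ((x₀ - α₁) * (x₀ - α₂)) * h3'
      exact (mul_ne_zero (mul_ne_zero hr1 hr2) hr3) (pow_eq_zero_iff two_ne_zero |>.mp this)
    have hyn : y₀ ≠ W.negY x₀ y₀ := by
      rw [hneg]
      intro hc
      exact hy0 (by
        have : 2 * y₀ = 0 := by linear_combination hc
        exact (mul_eq_zero.mp this).resolve_left h2)
    have hy2 : y₀ ^ 2 = (r₁ * r₂ * r₃) ^ 2 := by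
      rw [heq, ← h1, ← h2', ← h3']; ring
    have hkey : N ^ 2 = 4 * y₀ ^ 2 * (3 * x₀ - (α₁ + α₂ + α₃)) := by
      have e2 : α₂ = x₀ - r₂ ^ 2 := by linear_combination h2'
      have e3 : α₃ = x₀ - r₃ ^ 2 := by linear_combination h3'
      have e1 : x₀ = α₁ + r₁ ^ 2 := by linear_combination -h1
      rw [hN]
      subst e2 e3 e1
      linear_combination ((r₁ * r₂ + r₂ * r₃ + r₃ * r₁) ^ 3 -
        4 * (r₁ * r₂ + r₂ * r₃ + r₃ * r₁) * (r₁ * r₂ * r₃) * (r₁ + r₂ + r₃) +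
        8 * (r₁ * r₂ * r₃) ^ 2) * hs - 4 * (r₁ ^ 2 + r₂ ^ 2 + r₃ ^ 2) * hy2
    have hslope : W.slope x₀ x₀ y₀ y₀ = N / (2 * y₀) := by
      rw [slope_of_Y_ne rfl hyn, hneg]
      simp only [hW, cubicCurve, hN]
      ring_nf
    have hx : W.addX x₀ x₀ (W.slope x₀ x₀ y₀ y₀) = x₀ := by
      rw [addX, hslope]
      simp only [hW, cubicCurve]
      field_simp
      linear_combination hkey
    have hPP : P + P = -P := by
      rw [add_self_of_Y_ne hyn, neg_some]
      refine some_eq_some_aux hx ?_ _ _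
      rw [addY, negAddY, hx]
      ring_nf
      rfl
    have h3 : (3 : ℕ) • P = 0 := by
      rw [show (3 : ℕ) • P = P + P + P by rw [succ_nsmul, two_nsmul], hPP, neg_add_cancel]
    exact addOrderOf_eq_prime h3 (some_ne_zero hP)
end
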